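/- arXiv:1404.2895 — 3 statements merged into one kernel-verified Lean document; each statement's English description precedes it below -/
import Mathlib

section
/- Let F be a finite s-uniform hypergraph, let p ∈ (0,1), and let (z_i)_{i ∈ V(F)} be independent Bernoulli random variables with Pr[z_i = 1] = p for all i. Let F' be the random subhypergraph F' = {A ∈ F : z_i = 1 for all i ∈ A}. Suppose there exists α > 0 such that |F|·p^{(1−α)s} < 1. Then for any c ≥ e·2^s·s·α, Pr[τ(F') > s²·(c/α)^{s+1}] ≤ s²·|V(F)|^{s−1}·p^c. -/
/-- A finite hypergraph on vertex type `V`. -/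
structure FinHypergraph (V : Type) [DecidableEq V] where
  verts : Finset V
  edges : Finset (Finset V)
  edge_sub : ∀ e ∈ edges, e ⊆ verts

variable {V W : Type} [DecidableEq V] [DecidableEq W]

/-- The number of edges of `G` of size `j` containing the set `A`. -/
def FinHypergraph.degJ (G : FinHypergraph V) (j : ℕ) (A : Finset V) : ℕ :=
  (G.edges.filter fun e => A ⊆ e ∧ e.card = j).card

/-- `G` admits a proper coloring with `n` colors: no edge is monochromatic. -/
def FinHypergraph.Colorable (G : FinHypergraph V) (n : ℕ) : Prop :=
  ∃ c : V → ℕ, (∀ v ∈ G.verts, c v < n) ∧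
    ∀ e ∈ G.edges, ∃ u ∈ e, ∃ w ∈ e, c u ≠ c w

/-- `S` is (the edge set of) a subhypergraph of `G` isomorphic to `H` via an
isomorphism sending `v` to `u`. -/
def FinHypergraph.IsCopyAt (H : FinHypergraph W) (G : FinHypergraph V) (v : W) (u : V)
    (S : Finset (Finset V)) : Prop :=
  S ⊆ G.edges ∧ ∃ φ : W → V, Set.InjOn φ ↑H.verts ∧ φ v = u ∧
    H.verts.image φ = S.sup id ∧
    ∀ E : Finset W, E ⊆ H.verts → (E ∈ H.edges ↔ E.image φ ∈ S)

/-- The number of subhypergraphs of `G` isomorphic to `H` via an isomorphism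
sending `v` to `u`. -/
noncomputable def FinHypergraph.copyCount (H : FinHypergraph W) (G : FinHypergraph V)
    (v : W) (u : V) : ℕ :=
  Set.ncard {S : Finset (Finset V) | H.IsCopyAt G v u S}

/-- `Δ_{H,v}(G)`. -/
noncomputable def FinHypergraph.DeltaHv (H : FinHypergraph W) (G : FinHypergraph V) (v : W) : ℕ :=
  G.verts.sup (H.copyCount G v)

/-- `Δ_H(G) = min_{v ∈ V(H)} Δ_{H,v}(G)`. -/
noncomputable def FinHypergraph.DeltaH (H : FinHypergraph W) (G : FinHypergraph V) : ℕ :=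
  sInf (H.DeltaHv G '' ↑H.verts)

/-- `Δ_H(G) ≤ D`. -/
def FinHypergraph.DeltaHLe (H : FinHypergraph W) (G : FinHypergraph V) (D : ℝ) : Prop :=
  ∃ v ∈ H.verts, ∀ u ∈ G.verts, (H.copyCount G v u : ℝ) ≤ D

/-- The edge set `E` contains a subhypergraph isomorphic to `H`. -/
def FinHypergraph.HasCopy (H : FinHypergraph W) (E : Finset (Finset V)) : Prop :=
  ∃ S ⊆ E, ∃ φ : W → V, Set.InjOn φ ↑H.verts ∧
    H.verts.image φ = S.sup id ∧
    ∀ A : Finset W, A ⊆ H.verts → (A ∈ H.edges ↔ A.image φ ∈ S)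

/-- The subhypergraph of `G` induced by `S`. -/
def FinHypergraph.induced (G : FinHypergraph V) (S : Finset V) : FinHypergraph V where
  verts := G.verts ∩ S
  edges := G.edges.filter fun e => e ⊆ S
  edge_sub := by
    intro e he
    rw [Finset.mem_filter] at he
    exact Finset.subset_inter (G.edge_sub e he.1) he.2

/-- `G` is `(Δ, w 2, …, w k)`-sparse. -/
def FinHypergraph.Sparse (G : FinHypergraph V) (k : ℕ) (Δ : ℝ) (w : ℕ → ℝ) : Prop :=
  (∀ u ∈ G.verts, (G.degJ k {u} : ℝ) ≤ Δ) ∧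
    ∀ j l : ℕ, 1 ≤ l → l < j → j ≤ k → ∀ A ⊆ G.verts, A.card = l →
      (G.degJ j A : ℝ) ≤ Δ ^ (((j : ℝ) - l) / ((k : ℝ) - 1)) * w j

/-- The maximum `(j,l)`-degree of `G`. -/
def FinHypergraph.maxDegJL (G : FinHypergraph V) (j l : ℕ) : ℕ :=
  (G.verts.powersetCard l).sup (G.degJ j)

/-- `H` is a triangle. -/
def FinHypergraph.IsTriangle (H : FinHypergraph W) : Prop :=
  ∃ e f g : Finset W, ∃ u v w : W,
    H.edges = {e, f, g} ∧ H.verts = e ∪ f ∪ g ∧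
    e ≠ f ∧ f ≠ g ∧ e ≠ g ∧ u ≠ v ∧ v ≠ w ∧ u ≠ w ∧
    u ∈ e ∧ v ∈ e ∧ v ∈ f ∧ w ∈ f ∧ w ∈ g ∧ u ∈ g ∧
    ({u, v, w} : Finset W) ∩ e ∩ f ∩ g = ∅

/-- `G` contains a triangle. -/
def FinHypergraph.ContainsTriangle (G : FinHypergraph V) : Prop :=
  ∃ e ∈ G.edges, ∃ f ∈ G.edges, ∃ g ∈ G.edges, ∃ u v w : V,
    e ≠ f ∧ f ≠ g ∧ e ≠ g ∧ u ≠ v ∧ v ≠ w ∧ u ≠ w ∧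
    u ∈ e ∧ v ∈ e ∧ v ∈ f ∧ w ∈ f ∧ w ∈ g ∧ u ∈ g ∧
    ({u, v, w} : Finset V) ∩ e ∩ f ∩ g = ∅

/-- The hypergraph `H` is connected. -/
def FinHypergraph.Connected (H : FinHypergraph W) : Prop :=
  ∀ u ∈ H.verts, ∀ v ∈ H.verts, ∃ n : ℕ, ∃ e : Fin (n + 1) → Finset W,
    (∀ i, e i ∈ H.edges) ∧ u ∈ e 0 ∧ v ∈ e (Fin.last n) ∧
    ∀ i : Fin n, (e i.castSucc ∩ e i.succ).Nonempty

/-- The edge set `S` forms a connected hypergraph (on the union of its edges). -/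
def ConnectedEdges (S : Finset (Finset V)) : Prop :=
  ∀ u ∈ S.sup id, ∀ v ∈ S.sup id, ∃ n : ℕ, ∃ e : Fin (n + 1) → Finset V,
    (∀ i, e i ∈ S) ∧ u ∈ e 0 ∧ v ∈ e (Fin.last n) ∧
    ∀ i : Fin n, (e i.castSucc ∩ e i.succ).Nonempty

/-- The transversal number of the hypergraph with vertex set `F.verts` and edge set `E`. -/
noncomputable def FinHypergraph.tau (F : FinHypergraph V) (E : Finset (Finset V)) : ℕ :=
  sInf {n : ℕ | ∃ K : Finset V, K ⊆ F.verts ∧ K.card = n ∧ ∀ A ∈ E, (A ∩ K).Nonempty}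

/-- The link of `A` in `F`. -/
def FinHypergraph.link (F : FinHypergraph V) (A : Finset V) : Finset (Finset V) :=
  (F.edges.filter fun B => A ⊆ B).image fun B => B \ A

open MeasureTheory ProbabilityTheory

set_option maxHeartbeats 1000000

/-- Lemma `hittinglemma`: let `F` be an `s`-uniform hypergraph and
let `(z_i)_{i ∈ V(F)}` be independent Bernoulli(`p`) random variables. Let
`F' = {A ∈ F : z_i = 1 for all i ∈ A}`. If there is `α > 0` with
`|F| p^{(1-α)s} < 1`, then for any `c ≥ e 2^s s α`,
`Pr[τ(F') > s² (c/α)^{s+1}] ≤ s² |V(F)|^{s-1} p^c`. -/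
theorem statement_4 (V : Type) [DecidableEq V] (s : ℕ) (F : FinHypergraph V)
    (hunif : ∀ e ∈ F.edges, e.card = s)
    (p : ℝ) (hp0 : 0 < p) (hp1 : p < 1)
    {Ω : Type} [MeasurableSpace Ω] (μ : Measure Ω) [IsProbabilityMeasure μ]
    (z : V → Ω → Bool) (hmeas : ∀ i ∈ F.verts, Measurable (z i))
    (hindep : iIndepFun (fun i : F.verts => z i) μ)
    (hbern : ∀ i ∈ F.verts, μ {ω | z i ω = true} = ENNReal.ofReal p)
    (α : ℝ) (hα : 0 < α)
    (hsize : (F.edges.card : ℝ) * p ^ ((1 - α) * s) < 1)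
    (c : ℝ) (hc : Real.exp 1 * 2 ^ s * s * α ≤ c) :
    μ {ω | ((s : ℝ) ^ 2 * (c / α) ^ (s + 1) <
        (F.tau (F.edges.filter fun A => ∀ i ∈ A, z i ω = true) : ℝ))} ≤
      ENNReal.ofReal ((s : ℝ) ^ 2 * (F.verts.card : ℝ) ^ (s - 1) * p ^ c) := by

  classical
  -- basic facts about c and alpha
  have he2 : (2:ℝ) ≤ Real.exp 1 := by
    have := Real.add_one_le_exp (1:ℝ); linarith
  have hc0 : 0 ≤ c := by
    have h1 : (0:ℝ) ≤ Real.exp 1 * 2 ^ s * s * α := by positivity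
    linarith
  -- transversal bound helper
  have tau_le : ∀ (E : Finset (Finset V)) (K : Finset V), K ⊆ F.verts →
      (∀ A ∈ E, (A ∩ K).Nonempty) → F.tau E ≤ K.card := by
    intro E K hK hKt
    exact Nat.sInf_le ⟨K, hK, rfl, hKt⟩
  by_cases hE : F.edges = ∅
  · -- no edges: tau = 0 and the event is empty
    have hEv : {ω | ((s : ℝ) ^ 2 * (c / α) ^ (s + 1) <
        (F.tau (F.edges.filter fun A => ∀ i ∈ A, z i ω = true) : ℝ))} = ∅ := by
      ext ω
      simp only [Set.mem_setOf_eq, Set.mem_empty_iff_false, iff_false, not_lt]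
      have htau : F.tau (F.edges.filter fun A => ∀ i ∈ A, z i ω = true) = 0 := by
        have := tau_le (F.edges.filter fun A => ∀ i ∈ A, z i ω = true) ∅
          (Finset.empty_subset _) (by simp [hE])
        simpa [hE] using this
      rw [htau]
      have : (0:ℝ) ≤ (s : ℝ) ^ 2 * (c / α) ^ (s + 1) := by positivity
      simpa using this
    rw [hEv]
    simp only [measure_empty]
    exact zero_le
  -- main case
  obtain ⟨e₀, he₀⟩ := Finset.nonempty_iff_ne_empty.2 hE
  have hs1 : 1 ≤ s := by
    rcases Nat.eq_zero_or_pos s with h0 | h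
    · exfalso
      have : ((1:ℝ) - α) * (s:ℕ) = 0 := by rw [h0]; simp
      rw [this, Real.rpow_zero, mul_one] at hsize
      have : 1 ≤ (F.edges.card : ℝ) := by
        have : 1 ≤ F.edges.card := Finset.card_pos.2 ⟨e₀, he₀⟩
        exact_mod_cast this
      linarith
    · exact h
  have hV1 : 1 ≤ F.verts.card := by
    have h1 : e₀.card = s := hunif e₀ he₀
    have h2 : e₀ ⊆ F.verts := F.edge_sub e₀ he₀
    have := Finset.card_le_card h2
    omega
  have hαc : α ≤ c := by
    have hs1' : (1:ℝ) ≤ s := by exact_mod_cast hs1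
    have h2s : (2:ℝ) ≤ 2 ^ s := by
      calc (2:ℝ) = 2^1 := (pow_one 2).symm
      _ ≤ 2^s := by exact pow_le_pow_right₀ (by norm_num) hs1
    have h4 : (1:ℝ) ≤ Real.exp 1 * 2 ^ s * s := by
      have h5 : (4:ℝ) ≤ Real.exp 1 * 2 ^ s := by nlinarith
      nlinarith
    have h5 := mul_le_mul_of_nonneg_right h4 hα.le
    rw [one_mul] at h5
    linarith
  have hcpos : 0 < c := lt_of_lt_of_le hα hαc
  set x : ℝ := c / α with hxdef
  have hx1 : 1 ≤ x := (one_le_div hα).2 hαc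
  have hxc : α * x = c := by rw [hxdef]; field_simp
  set k : ℕ := ⌊(s:ℝ) * x ^ (s + 1)⌋₊ with hkdef
  have hxpow_nonneg : (0:ℝ) ≤ (s:ℝ) * x ^ (s+1) := by positivity
  have hk_le : (k:ℝ) ≤ (s:ℝ) * x ^ (s + 1) := Nat.floor_le hxpow_nonneg
  have hk_lt : (s:ℝ) * x ^ (s + 1) < (k:ℝ) + 1 := Nat.lt_floor_add_one _
  have hs1' : (1:ℝ) ≤ (s:ℝ) := by exact_mod_cast hs1
  have hxx : x ≤ x ^ (s + 1) := by
    calc x = x ^ 1 := (pow_one x).symm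
    _ ≤ x ^ (s+1) := pow_le_pow_right₀ hx1 (by omega)
  have hck : c ≤ α * (s:ℝ) * ((k:ℝ) + 1) := by
    have h1 : x ≤ (k:ℝ) + 1 := by nlinarith
    have h2 := mul_le_mul_of_nonneg_left h1 hα.le
    have h3 : 0 ≤ α * ((s:ℝ) - 1) * ((k:ℝ) + 1) :=
      mul_nonneg (mul_nonneg hα.le (by linarith)) (by positivity)
    nlinarith
  -- the family of matchings of size k+1
  set M𝓜 : Finset (Finset (Finset V)) :=
    (F.edges.powersetCard (k+1)).filter
      (fun M => ∀ a ∈ M, ∀ b ∈ M, a ≠ b → Disjoint a b) with hM𝓜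
  set Sv : Finset (Finset V) → Set Ω := fun M => {ω | ∀ i ∈ M.sup id, z i ω = true} with hSv
  -- Step A: event is contained in the union of survival events
  have hsub : {ω | ((s : ℝ) ^ 2 * (c / α) ^ (s + 1) <
        (F.tau (F.edges.filter fun A => ∀ i ∈ A, z i ω = true) : ℝ))} ⊆
      ⋃ M ∈ M𝓜, Sv M := by
    intro ω hω
    simp only [Set.mem_setOf_eq] at hω
    set E : Finset (Finset V) := F.edges.filter (fun A => ∀ i ∈ A, z i ω = true) with hEdef
    -- claim: E contains k+1 pairwise disjoint edges
    by_cases hmatch : ∃ M ⊆ E, M.card = k + 1 ∧ ∀ a ∈ M, ∀ b ∈ M, a ≠ b → Disjoint a b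
    · obtain ⟨M, hME, hMcard, hMdisj⟩ := hmatch
      have hMedges : M ⊆ F.edges := hME.trans (Finset.filter_subset _ _)
      have hMmem : M ∈ M𝓜 := by
        rw [hM𝓜, Finset.mem_filter, Finset.mem_powersetCard]
        exact ⟨⟨hMedges, hMcard⟩, hMdisj⟩
      refine Set.mem_biUnion hMmem ?_
      intro i hi
      rw [Finset.mem_sup] at hi
      obtain ⟨A, hA, hiA⟩ := hi
      have := hME hA
      rw [hEdef, Finset.mem_filter] at this
      exact this.2 i hiA
    · exfalso
      push_neg at hmatch
      -- take a maximal disjoint subfamily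
      set 𝒟 : Finset (Finset (Finset V)) :=
        E.powerset.filter (fun M => ∀ a ∈ M, ∀ b ∈ M, a ≠ b → Disjoint a b) with h𝒟
      have h𝒟ne : 𝒟.Nonempty := ⟨∅, by simp [h𝒟]⟩
      obtain ⟨M₀, hM₀mem, hM₀max⟩ := Finset.exists_max_image 𝒟 Finset.card h𝒟ne
      rw [h𝒟, Finset.mem_filter, Finset.mem_powerset] at hM₀mem
      obtain ⟨hM₀E, hM₀disj⟩ := hM₀mem
      have hM₀card : M₀.card ≤ k := by
        by_contra hgt
        push_neg at hgt
        obtain ⟨M₁, hM₁sub, hM₁card⟩ := Finset.exists_subset_card_eq (show k+1 ≤ M₀.card from hgt)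
        obtain ⟨a, ha, b, hb, hab, hnd⟩ := hmatch M₁ (hM₁sub.trans hM₀E) hM₁card
        exact hnd (hM₀disj a (hM₁sub ha) b (hM₁sub hb) hab)
      set K : Finset V := M₀.sup id with hK
      have hKverts : K ⊆ F.verts := by
        intro v hv
        rw [hK, Finset.mem_sup] at hv
        obtain ⟨A, hA, hvA⟩ := hv
        have hA' := hM₀E hA
        rw [hEdef, Finset.mem_filter] at hA'
        exact F.edge_sub A hA'.1 hvA
      have hKcard : K.card ≤ s * k := by
        have h1 : K = M₀.biUnion id := by rw [hK, Finset.sup_eq_biUnion]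
        have h2 : K.card ≤ ∑ A ∈ M₀, A.card := by
          rw [h1]; exact Finset.card_biUnion_le
        have hcards : ∀ A ∈ M₀, A.card = s := by
          intro A hA
          have h' := hM₀E hA
          rw [hEdef, Finset.mem_filter] at h'
          exact hunif A h'.1
        have h3 : ∑ A ∈ M₀, A.card = s * M₀.card := by
          rw [Finset.sum_congr rfl hcards, Finset.sum_const, smul_eq_mul, mul_comm]
        calc K.card ≤ ∑ A ∈ M₀, A.card := h2
          _ = s * M₀.card := h3
          _ ≤ s * k := Nat.mul_le_mul_left s hM₀card
      have hKtrans : ∀ A ∈ E, (A ∩ K).Nonempty := by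
        intro A hA
        by_contra hvac
        rw [Finset.not_nonempty_iff_eq_empty] at hvac
        have hAne : A ∉ M₀ := by
          intro hmem
          have hAK : A ⊆ K := Finset.le_sup (f := id) hmem
          have hAs : A.card = s := by
            have h' := hM₀E hmem
            rw [hEdef, Finset.mem_filter] at h'
            exact hunif A h'.1
          have hA0 : A = A ∩ K := (Finset.inter_eq_left.2 hAK).symm
          rw [hvac] at hA0
          rw [hA0, Finset.card_empty] at hAs
          omega
        have hins : insert A M₀ ∈ 𝒟 := by
          rw [h𝒟, Finset.mem_filter, Finset.mem_powerset]
          constructor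
          · exact Finset.insert_subset hA hM₀E
          · intro a ha b hb hab
            rw [Finset.mem_insert] at ha hb
            rcases ha with rfl | ha <;> rcases hb with rfl | hb
            · exact absurd rfl hab
            · have hbK : b ⊆ K := Finset.le_sup (f := id) hb
              exact Finset.disjoint_left.2 fun v hv hvb =>
                (Finset.eq_empty_iff_forall_notMem.1 hvac v)
                  (Finset.mem_inter.2 ⟨hv, hbK hvb⟩)
            · have haK : a ⊆ K := Finset.le_sup (f := id) ha
              exact Finset.disjoint_right.2 fun v hv hva =>
                (Finset.eq_empty_iff_forall_notMem.1 hvac v)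
                  (Finset.mem_inter.2 ⟨hv, haK hva⟩)
            · exact hM₀disj a ha b hb hab
        have := hM₀max _ hins
        rw [Finset.card_insert_of_notMem hAne] at this
        omega
      have htau : F.tau E ≤ s * k := le_trans (tau_le E K hKverts hKtrans) hKcard
      have : (F.tau E : ℝ) ≤ (s:ℝ) * k := by exact_mod_cast htau
      have hsk : (s:ℝ) * k ≤ (s:ℝ)^2 * x ^ (s+1) := by nlinarith
      rw [← hxdef] at hω
      linarith
  -- Step B: probability of each survival event
  have hSvmeas : ∀ M ∈ M𝓜, μ (Sv M) = ENNReal.ofReal p ^ (s * (k+1)) := by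
    intro M hM
    rw [hM𝓜, Finset.mem_filter, Finset.mem_powersetCard] at hM
    obtain ⟨⟨hME, hMcard⟩, hMdisj⟩ := hM
    set U : Finset V := M.sup id with hU
    have hUverts : U ⊆ F.verts := by
      intro v hv
      rw [hU, Finset.mem_sup] at hv
      obtain ⟨A, hA, hvA⟩ := hv
      exact F.edge_sub A (hME hA) hvA
    have hUcard : U.card = s * (k+1) := by
      have h1 : U = M.biUnion id := by rw [hU, Finset.sup_eq_biUnion]
      have hcards : ∀ A ∈ M, A.card = s := fun A hA => hunif A (hME hA)
      rw [h1]
      rw [Finset.card_biUnion (t := id) (fun a ha b hb hab => hMdisj a ha b hb hab)]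
      simp only [id_eq]
      rw [Finset.sum_congr rfl hcards, Finset.sum_const, smul_eq_mul, hMcard, mul_comm]
    set T : Finset {v // v ∈ F.verts} := F.verts.attach.filter (fun i => ↑i ∈ U) with hT
    have hTU : T.image Subtype.val = U := by
      ext v
      simp only [hT, Finset.mem_image, Finset.mem_filter, Finset.mem_attach, true_and]
      constructor
      · rintro ⟨⟨w, hw⟩, h1, rfl⟩; exact h1
      · intro hv; exact ⟨⟨v, hUverts hv⟩, hv, rfl⟩
    have hTcard : T.card = s * (k+1) := by
      rw [← hUcard, ← hTU]
      exact (Finset.card_image_of_injective T Subtype.val_injective).symm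
    have hSet : Sv M = ⋂ i ∈ T, (fun j : {v // v ∈ F.verts} => z ↑j) i ⁻¹' {true} := by
      ext ω
      simp only [hSv, Set.mem_setOf_eq, Set.mem_iInter, Set.mem_preimage,
        Set.mem_singleton_iff]
      constructor
      · intro h i hi
        rw [hT, Finset.mem_filter] at hi
        exact h ↑i hi.2
      · intro h i hi
        exact h ⟨i, hUverts hi⟩ (by rw [hT, Finset.mem_filter]; exact ⟨Finset.mem_attach _ _, hi⟩)
    rw [hSet, hindep.measure_inter_preimage_eq_mul T
      (sets := fun _ => ({true} : Set Bool)) (fun i _ => MeasurableSet.singleton true)]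
    have hval : ∀ i ∈ T, μ ((fun j : {v // v ∈ F.verts} => z ↑j) i ⁻¹' {true})
        = ENNReal.ofReal p := by
      intro i _
      have : (fun j : {v // v ∈ F.verts} => z ↑j) i ⁻¹' {true} = {ω | z ↑i ω = true} := by
        ext ω; simp
      rw [this]
      exact hbern ↑i i.2
    rw [Finset.prod_congr rfl hval, Finset.prod_const, hTcard]
  -- Step C: combine
  calc μ {ω | ((s : ℝ) ^ 2 * (c / α) ^ (s + 1) <
        (F.tau (F.edges.filter fun A => ∀ i ∈ A, z i ω = true) : ℝ))}
      ≤ μ (⋃ M ∈ M𝓜, Sv M) := measure_mono hsub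
    _ ≤ ∑ M ∈ M𝓜, μ (Sv M) := measure_biUnion_finset_le M𝓜 Sv
    _ = M𝓜.card • (ENNReal.ofReal p ^ (s * (k+1))) := by
        rw [Finset.sum_congr rfl hSvmeas, Finset.sum_const]
    _ = (M𝓜.card : ENNReal) * ENNReal.ofReal p ^ (s * (k+1)) := by
        rw [nsmul_eq_mul]
    _ = ENNReal.ofReal ((M𝓜.card : ℝ) * p ^ (s * (k+1))) := by
        rw [ENNReal.ofReal_mul (by positivity), ENNReal.ofReal_pow hp0.le,
          ENNReal.ofReal_natCast]
    _ ≤ ENNReal.ofReal ((s : ℝ) ^ 2 * (F.verts.card : ℝ) ^ (s - 1) * p ^ c) := by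
        apply ENNReal.ofReal_le_ofReal
        have hcard : (M𝓜.card : ℝ) ≤ (F.edges.card : ℝ) ^ (k+1) := by
          have h1 : M𝓜.card ≤ (F.edges.powersetCard (k+1)).card :=
            Finset.card_filter_le _ _
          have h2 : (F.edges.powersetCard (k+1)).card = (F.edges.card).choose (k+1) :=
            Finset.card_powersetCard _ _
          have h3 : (F.edges.card).choose (k+1) ≤ F.edges.card ^ (k+1) :=
            Nat.choose_le_pow _ _
          exact_mod_cast le_trans h1 (h2 ▸ h3)
        have hFp : (F.edges.card : ℝ) * p ^ s ≤ p ^ (α * s) := by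
          have h1 : (0:ℝ) < p ^ (α * s) := Real.rpow_pos_of_pos hp0 _
          have h2 : (F.edges.card : ℝ) * p ^ ((1 - α) * s) * p ^ (α * s)
              ≤ 1 * p ^ (α * s) :=
            mul_le_mul_of_nonneg_right hsize.le h1.le
          rw [mul_assoc, ← Real.rpow_add hp0, one_mul] at h2
          have h3 : (1 - α) * (s:ℝ) + α * s = (s:ℝ) := by ring
          rw [h3, Real.rpow_natCast] at h2
          exact h2
        have hstep1 : (M𝓜.card : ℝ) * p ^ (s * (k+1))
            ≤ ((F.edges.card : ℝ) * p ^ s) ^ (k+1) := by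
          rw [mul_pow, ← pow_mul]
          exact mul_le_mul_of_nonneg_right hcard (by positivity)
        have hstep2 : ((F.edges.card : ℝ) * p ^ s) ^ (k+1) ≤ (p ^ (α * s)) ^ (k+1) :=
          pow_le_pow_left₀ (by positivity) hFp _
        have hstep3 : (p ^ (α * (s:ℝ))) ^ (k+1) = p ^ (α * (s:ℝ) * ((k:ℝ)+1)) := by
          rw [← Real.rpow_natCast (p ^ (α * (s:ℝ))) (k+1), ← Real.rpow_mul hp0.le]
          norm_num
        have hstep4 : p ^ (α * (s:ℝ) * ((k:ℝ)+1)) ≤ p ^ c :=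
          Real.rpow_le_rpow_of_exponent_ge hp0 hp1.le hck
        have hstep5 : p ^ c ≤ (s : ℝ) ^ 2 * (F.verts.card : ℝ) ^ (s - 1) * p ^ c := by
          have h1 : (1:ℝ) ≤ (s : ℝ) ^ 2 := by
            have : (1:ℝ) ≤ (s:ℝ) := by exact_mod_cast hs1
            nlinarith
          have h2 : (1:ℝ) ≤ (F.verts.card : ℝ) ^ (s - 1) := by
            exact one_le_pow₀ (by exact_mod_cast hV1)
          have hppos : (0:ℝ) < p ^ c := Real.rpow_pos_of_pos hp0 _
          have h3 : (1:ℝ) ≤ (s:ℝ) ^ 2 * (F.verts.card : ℝ) ^ (s - 1) := by nlinarith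
          have h4 := mul_le_mul_of_nonneg_right h3 hppos.le
          rw [one_mul] at h4
          linarith
        calc (M𝓜.card : ℝ) * p ^ (s * (k+1))
            ≤ ((F.edges.card : ℝ) * p ^ s) ^ (k+1) := hstep1
          _ ≤ (p ^ (α * (s:ℝ))) ^ (k+1) := hstep2
          _ = p ^ (α * (s:ℝ) * ((k:ℝ)+1)) := hstep3
          _ ≤ p ^ c := hstep4
          _ ≤ _ := hstep5
end

section
/- Let k ≥ 1 and let F be a finite k-uniform hypergraph with at least one edge. Then there exists a set A ⊆ V(F) with |A| ≤ k−1 such that the link hypergraph L_F(A) contains a matching of size at least |F|^{1/k}/(k−|A|). -/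
variable {V W : Type} [DecidableEq V] [DecidableEq W]

lemma FinHypergraph.link_empty (F : FinHypergraph V) : F.link ∅ = F.edges := by
  simp [FinHypergraph.link]

lemma FinHypergraph.mem_link {F : FinHypergraph V} {A S : Finset V} :
    S ∈ F.link A ↔ ∃ B, B ∈ F.edges ∧ A ⊆ B ∧ B \ A = S := by
  simp only [FinHypergraph.link, Finset.mem_image, Finset.mem_filter, and_assoc]

lemma matching_aux : ∀ (k : ℕ), 1 ≤ k → ∀ (V : Type) [DecidableEq V]
    (F : FinHypergraph V), (∀ e ∈ F.edges, e.card = k) → F.edges.Nonempty →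
    ∃ A ⊆ F.verts, A.card ≤ k - 1 ∧
      ∃ M ⊆ F.link A, (∀ e₁ ∈ M, ∀ e₂ ∈ M, e₁ ≠ e₂ → Disjoint e₁ e₂) ∧
        (F.edges.card : ℝ) ^ ((1 : ℝ) / k) / ((k : ℝ) - A.card) ≤ (M.card : ℝ) := by
  intro k
  induction k using Nat.strong_induction_on with
  | _ k IH =>
  intro hk V _ F hunif hne
  classical
  set m := F.edges.card with hm
  have hm1 : 1 ≤ m := Finset.card_pos.mpr hne
  have hm0 : (0 : ℝ) < m := by exact_mod_cast hm1
  rcases eq_or_lt_of_le hk with hk1 | hk2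
  · -- base case k = 1
    subst hk1
    refine ⟨∅, Finset.empty_subset _, by simp, F.edges, ?_, ?_, ?_⟩
    · rw [F.link_empty]
    · intro e₁ h₁ e₂ h₂ hne12
      obtain ⟨a, rfl⟩ := Finset.card_eq_one.mp (hunif e₁ h₁)
      obtain ⟨b, rfl⟩ := Finset.card_eq_one.mp (hunif e₂ h₂)
      simp only [Finset.disjoint_singleton]
      intro hab; exact hne12 (by rw [hab])
    · have h1 : (1 : ℝ) / ((1 : ℕ) : ℝ) = 1 := by norm_num
      rw [h1, Real.rpow_one]
      simp [hm]
  · -- inductive case k ≥ 2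
    -- take a maximum matching
    set P : Finset (Finset (Finset V)) := F.edges.powerset.filter
      (fun M => ∀ e₁ ∈ M, ∀ e₂ ∈ M, e₁ ≠ e₂ → Disjoint e₁ e₂) with hPdef
    have hPne : P.Nonempty := ⟨∅, by simp [hPdef]⟩
    obtain ⟨Mx, hMxP, hMxmax⟩ := P.exists_max_image Finset.card hPne
    rw [hPdef, Finset.mem_filter, Finset.mem_powerset] at hMxP
    obtain ⟨hMxsub, hMxdisj⟩ := hMxP
    set T : Finset V := Mx.sup id with hT
    -- every edge meets T
    have hmeet : ∀ e ∈ F.edges, (e ∩ T).Nonempty := by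
      intro e he
      by_contra hcon
      rw [Finset.not_nonempty_iff_eq_empty] at hcon
      have heM : e ∉ Mx := by
        intro heM
        have h1 : e ⊆ T := Finset.le_sup (f := id) heM
        have h2 : e ∩ T = e := Finset.inter_eq_left.mpr h1
        have h3 : e.Nonempty := Finset.card_pos.mp (by rw [hunif e he]; omega)
        rw [h2] at hcon
        exact h3.ne_empty hcon
      have hdisjT : ∀ f ∈ Mx, Disjoint e f := by
        intro f hf
        rw [Finset.disjoint_left]
        intro x hxe hxf
        have : x ∈ T := Finset.mem_sup.mpr ⟨f, hf, hxf⟩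
        have : x ∈ e ∩ T := Finset.mem_inter.mpr ⟨hxe, this⟩
        rw [hcon] at this
        exact absurd this (Finset.notMem_empty x)
      have hmem : insert e Mx ∈ P := by
        rw [hPdef, Finset.mem_filter, Finset.mem_powerset]
        refine ⟨Finset.insert_subset he hMxsub, ?_⟩
        intro e₁ h₁ e₂ h₂ hne12
        rcases Finset.mem_insert.mp h₁ with h₁' | h₁' <;>
          rcases Finset.mem_insert.mp h₂ with h₂' | h₂'
        · exact absurd (h₁'.trans h₂'.symm) hne12
        · exact h₁' ▸ hdisjT e₂ h₂'
        · exact h₂' ▸ (hdisjT e₁ h₁').symm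
        · exact hMxdisj e₁ h₁' e₂ h₂' hne12
      have := hMxmax _ hmem
      rw [Finset.card_insert_of_notMem heM] at this
      omega
    have hTne : T.Nonempty := by
      obtain ⟨e₀, he₀⟩ := hne
      obtain ⟨x, hx⟩ := hmeet e₀ he₀
      exact ⟨x, (Finset.mem_inter.mp hx).2⟩
    set deg : V → ℕ := fun v => (F.edges.filter fun e => v ∈ e).card with hdeg
    obtain ⟨v, hvT, hvdeg⟩ := Finset.exists_mem_eq_sup T hTne deg
    -- double counting
    have hsum : m ≤ ∑ u ∈ T, deg u := by
      have key : ∀ e : Finset V, (e ∩ T).card = ∑ u ∈ T, if u ∈ e then 1 else 0 := by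
        intro e
        rw [Finset.inter_comm, ← Finset.filter_mem_eq_inter, Finset.card_filter]
      calc m = ∑ e ∈ F.edges, 1 := by simp [hm]
        _ ≤ ∑ e ∈ F.edges, (e ∩ T).card := by
            refine Finset.sum_le_sum fun e he => ?_
            exact Finset.card_pos.mpr (hmeet e he)
        _ = ∑ e ∈ F.edges, ∑ u ∈ T, if u ∈ e then 1 else 0 := by
            exact Finset.sum_congr rfl fun e _ => key e
        _ = ∑ u ∈ T, ∑ e ∈ F.edges, if u ∈ e then 1 else 0 := Finset.sum_comm
        _ = ∑ u ∈ T, deg u := by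
            refine Finset.sum_congr rfl fun u _ => ?_
            exact (Finset.card_filter _ _).symm
    have hmT : m ≤ T.card * deg v := by
      calc m ≤ ∑ u ∈ T, deg u := hsum
        _ ≤ ∑ _u ∈ T, deg v := by
            refine Finset.sum_le_sum fun u hu => ?_
            exact le_of_le_of_eq (Finset.le_sup hu) hvdeg
        _ = T.card * deg v := by rw [Finset.sum_const, smul_eq_mul]
    have hTcard : T.card ≤ k * Mx.card := by
      calc T.card = (Mx.biUnion id).card := by rw [hT, Finset.sup_eq_biUnion]
        _ ≤ ∑ e ∈ Mx, (id e).card := Finset.card_biUnion_le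
        _ = ∑ _e ∈ Mx, k := by
            refine Finset.sum_congr rfl fun e he => ?_
            exact hunif e (hMxsub he)
        _ = Mx.card * k := by rw [Finset.sum_const, smul_eq_mul]
        _ = k * Mx.card := mul_comm _ _
    by_cases hcase : (m : ℝ) ^ ((1 : ℝ) / k) ≤ (k : ℝ) * Mx.card
    · -- the maximum matching is already large enough, take A = ∅
      refine ⟨∅, Finset.empty_subset _, by simp, Mx, ?_, hMxdisj, ?_⟩
      · rw [F.link_empty]; exact hMxsub
      · simp only [Finset.card_empty, Nat.cast_zero, sub_zero]
        rw [div_le_iff₀ (by positivity)]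
        calc (m : ℝ) ^ ((1 : ℝ) / k) ≤ (k : ℝ) * Mx.card := hcase
          _ = (Mx.card : ℝ) * k := mul_comm _ _
    · push_neg at hcase
      set d : ℕ := deg v with hd
      have hvedge : ∃ e ∈ F.edges, v ∈ e := by
        obtain ⟨e, he, hve⟩ := Finset.mem_sup.mp hvT
        exact ⟨e, hMxsub he, hve⟩
      have hd1 : 1 ≤ d := by
        obtain ⟨e, he, hve⟩ := hvedge
        refine Finset.card_pos.mpr ⟨e, Finset.mem_filter.mpr ⟨he, hve⟩⟩
      have hd0 : (0 : ℝ) < d := by exact_mod_cast hd1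
      -- lower bound on d
      have hd_lb : (m : ℝ) ^ (((k : ℝ) - 1) / k) ≤ d := by
        have h1 : (m : ℝ) ≤ ((k : ℝ) * Mx.card) * d := by
          have := hmT.trans (Nat.mul_le_mul_right (deg v) hTcard)
          calc (m : ℝ) ≤ ((k * Mx.card * deg v : ℕ) : ℝ) := by exact_mod_cast this
            _ = ((k : ℝ) * Mx.card) * d := by push_cast [hd]; ring
        have h2 : (m : ℝ) ≤ (m : ℝ) ^ ((1 : ℝ) / k) * d :=
          h1.trans (mul_le_mul_of_nonneg_right hcase.le hd0.le)
        have hk0 : (k : ℝ) ≠ 0 := by positivity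
        have hsplit : (m : ℝ) = (m : ℝ) ^ (((k : ℝ) - 1) / k) * (m : ℝ) ^ ((1 : ℝ) / k) := by
          rw [← Real.rpow_add hm0]
          have : ((k : ℝ) - 1) / k + 1 / k = 1 := by field_simp; ring
          rw [this, Real.rpow_one]
        have h3 : (m : ℝ) ^ (((k : ℝ) - 1) / k) * (m : ℝ) ^ ((1 : ℝ) / k) ≤
            (d : ℝ) * (m : ℝ) ^ ((1 : ℝ) / k) := by
          rw [← hsplit]
          calc (m : ℝ) ≤ (m : ℝ) ^ ((1 : ℝ) / k) * d := h2
            _ = (d : ℝ) * (m : ℝ) ^ ((1 : ℝ) / k) := mul_comm _ _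
        exact le_of_mul_le_mul_right h3 (Real.rpow_pos_of_pos hm0 _)
      -- the link hypergraph
      set G : FinHypergraph V := ⟨F.verts, F.link {v}, by
        intro e he
        rw [FinHypergraph.mem_link] at he
        obtain ⟨B, hB, -, rfl⟩ := he
        exact (Finset.sdiff_subset).trans (F.edge_sub B hB)⟩ with hG
      have hGunif : ∀ e ∈ G.edges, e.card = k - 1 := by
        intro e he
        rw [hG] at he
        rw [FinHypergraph.mem_link] at he
        obtain ⟨B, hB, hsub, rfl⟩ := he
        rw [Finset.card_sdiff_of_subset hsub, Finset.card_singleton, hunif B hB]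
      have hGne : G.edges.Nonempty := by
        obtain ⟨e, he, hve⟩ := hvedge
        exact ⟨e \ {v}, FinHypergraph.mem_link.mpr ⟨e, he, Finset.singleton_subset_iff.mpr hve, rfl⟩⟩
      have hGcard : G.edges.card = d := by
        show (F.link {v}).card = d
        rw [FinHypergraph.link]
        rw [Finset.card_image_of_injOn]
        · rw [hd, hdeg]
          congr 1
          apply Finset.filter_congr
          intro e _
          simp [Finset.singleton_subset_iff]
        · intro B₁ h₁ B₂ h₂ h12
          simp only [Finset.coe_filter, Set.mem_setOf_eq, Finset.singleton_subset_iff] at h₁ h₂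
          dsimp only at h12
          rw [Finset.sdiff_singleton_eq_erase, Finset.sdiff_singleton_eq_erase] at h12
          rw [← Finset.insert_erase h₁.2, ← Finset.insert_erase h₂.2, h12]
      obtain ⟨A', hA'sub, hA'card, M', hM'sub, hM'disj, hM'bound⟩ :=
        IH (k - 1) (by omega) (by omega) V G hGunif hGne
      rw [hGcard] at hM'bound
      have hkm1 : ((k - 1 : ℕ) : ℝ) = (k : ℝ) - 1 := by
        push_cast [Nat.cast_sub hk]; ring
      have hden_pos : (0 : ℝ) < ((k - 1 : ℕ) : ℝ) - A'.card := by
        rw [hkm1]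
        have : A'.card ≤ k - 2 := by omega
        have h2 : (A'.card : ℝ) ≤ ((k - 2 : ℕ) : ℝ) := by exact_mod_cast this
        have h3 : ((k - 2 : ℕ) : ℝ) = (k : ℝ) - 2 := by
          push_cast [Nat.cast_sub (by omega : 2 ≤ k)]; ring
        rw [h3] at h2
        linarith
      have hM'ne : M'.Nonempty := by
        rw [← Finset.card_pos]
        by_contra hcon
        push_neg at hcon
        have h0 : (M'.card : ℝ) = 0 := by
          have h00 : M'.card = 0 := by omega
          simp [h00]
        rw [h0] at hM'bound
        have hnum : (0 : ℝ) < (d : ℝ) ^ ((1 : ℝ) / ((k - 1 : ℕ) : ℝ)) :=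
          Real.rpow_pos_of_pos hd0 _
        have := div_pos hnum hden_pos
        linarith
      have hvA' : v ∉ A' := by
        obtain ⟨S, hS⟩ := hM'ne
        have := hM'sub hS
        rw [FinHypergraph.mem_link] at this
        obtain ⟨C, hC, hsubC, -⟩ := this
        rw [hG] at hC
        rw [FinHypergraph.mem_link] at hC
        obtain ⟨B, -, -, rfl⟩ := hC
        intro hv
        have := hsubC hv
        simp at this
      -- link of insert v A' equals link of A' in G
      have hlink_eq : F.link (insert v A') = G.link A' := by
        ext S
        rw [FinHypergraph.mem_link, FinHypergraph.mem_link]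
        constructor
        · rintro ⟨B, hB, hsub, rfl⟩
          have hvB : v ∈ B := hsub (Finset.mem_insert_self v A')
          refine ⟨B \ {v}, ?_, ?_, ?_⟩
          · show B \ {v} ∈ F.link {v}
            exact FinHypergraph.mem_link.mpr ⟨B, hB, Finset.singleton_subset_iff.mpr hvB, rfl⟩
          · intro a ha
            have haB : a ∈ B := hsub (Finset.mem_insert_of_mem ha)
            have hav : a ≠ v := fun h => hvA' (h ▸ ha)
            simp [Finset.mem_sdiff, haB, hav]
          · ext x
            simp only [Finset.mem_sdiff, Finset.mem_singleton, Finset.mem_insert]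
            tauto
        · rintro ⟨C, hC, hsub, rfl⟩
          have hC' : C ∈ F.link {v} := hC
          rw [FinHypergraph.mem_link] at hC'
          obtain ⟨B, hB, hvB, rfl⟩ := hC'
          refine ⟨B, hB, ?_, ?_⟩
          · refine Finset.insert_subset (hvB (Finset.mem_singleton_self v)) ?_
            exact hsub.trans Finset.sdiff_subset
          · ext x
            simp only [Finset.mem_sdiff, Finset.mem_singleton, Finset.mem_insert]
            tauto
      have hvverts : v ∈ F.verts := by
        obtain ⟨e, he, hve⟩ := hvedge
        exact F.edge_sub e he hve
      refine ⟨insert v A', Finset.insert_subset hvverts hA'sub, ?_, M', ?_, hM'disj, ?_⟩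
      · rw [Finset.card_insert_of_notMem hvA']
        omega
      · rw [hlink_eq]; exact hM'sub
      · have hcard : ((insert v A').card : ℝ) = (A'.card : ℝ) + 1 := by
          rw [Finset.card_insert_of_notMem hvA']; push_cast; ring
        rw [hcard]
        have hden_eq : (k : ℝ) - ((A'.card : ℝ) + 1) = ((k - 1 : ℕ) : ℝ) - A'.card := by
          rw [hkm1]; ring
        rw [hden_eq]
        refine le_trans ?_ hM'bound
        apply div_le_div_of_nonneg_right ?_ hden_pos.le
        -- m^(1/k) ≤ d^(1/(k-1))
        have hk0 : (k : ℝ) ≠ 0 := by positivity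
        have hkm1ne : (k : ℝ) - 1 ≠ 0 := by
          have : (2 : ℝ) ≤ k := by exact_mod_cast hk2
          linarith
        have hk2' : (2 : ℝ) ≤ (k : ℝ) := by exact_mod_cast hk2
        have hstep : ((m : ℝ) ^ (((k : ℝ) - 1) / k)) ^ ((1 : ℝ) / ((k : ℝ) - 1)) ≤
            (d : ℝ) ^ ((1 : ℝ) / ((k : ℝ) - 1)) :=
          Real.rpow_le_rpow (Real.rpow_nonneg hm0.le _) hd_lb
            (div_nonneg zero_le_one (by linarith))
        have hexp : ((m : ℝ) ^ (((k : ℝ) - 1) / k)) ^ ((1 : ℝ) / ((k : ℝ) - 1)) =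
            (m : ℝ) ^ ((1 : ℝ) / k) := by
          rw [← Real.rpow_mul hm0.le]
          congr 1
          field_simp
        rw [hexp] at hstep
        rw [hkm1]
        exact hstep

/-- Proposition `matchingclaim`: if `F` is a `k`-uniform hypergraph
with at least one edge, then there exists `A ⊆ V(F)` with `|A| ≤ k-1` such that the
link `L_F(A)` contains a matching of size at least `|F|^{1/k}/(k-|A|)`. -/
theorem statement_5 (k : ℕ) (hk : 1 ≤ k) (V : Type) [DecidableEq V]
    (F : FinHypergraph V) (hunif : ∀ e ∈ F.edges, e.card = k)
    (hne : F.edges.Nonempty) :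
    ∃ A ⊆ F.verts, A.card ≤ k - 1 ∧
      ∃ M ⊆ F.link A, (∀ e₁ ∈ M, ∀ e₂ ∈ M, e₁ ≠ e₂ → Disjoint e₁ e₂) ∧
        (F.edges.card : ℝ) ^ ((1 : ℝ) / k) / ((k : ℝ) - A.card) ≤ (M.card : ℝ) := by
  exact matching_aux k hk V F hunif hne
end

section
/- Let a, b, m ≥ 1 be fixed reals. Then there exists D > 0 (depending only on a, b, m) such that the following holds for every g > 0 and every d₀ > 0: define sequences d_t and s_t by s₀ = d₀^{a/b}·g, d_{t+1} = d_t/2^b + d_t^{1−1/m}, and s_{t+1} = s_t/2^a + d_t^{a/b − 1/m}. Then for every t ≥ 0 with d_t ≥ D, one has d_t ≤ 2·d₀·2^{−bt} and s_t ≤ d_t^{a/b}·g + d_t^{a/b − 1/(2m)}. -/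
open Real

section
variable (b m D : ℝ) (d : ℕ → ℝ)
variable (hb : 1 ≤ b) (hm : 1 ≤ m) (hD1 : 1 ≤ D)
variable (hrec : ∀ t : ℕ, d (t + 1) = d t / 2 ^ b + d t ^ (1 - 1 / m))
variable (hd0 : 0 < d 0)

include hrec hd0 in
lemma dpos : ∀ t, 0 < d t := by
  intro t
  induction t with
  | zero => exact hd0
  | succ n ih =>
    rw [hrec n]
    have := rpow_pos_of_pos ih (1 - 1/m)
    have h2b : (0:ℝ) < 2 ^ b := rpow_pos_of_pos two_pos b
    positivity

include hb hm hD1 hrec hd0 in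
lemma dstay (h1 : D ^ (-(1/m)) ≤ 1 - 2 ^ (-b)) :
    ∀ t, D ≤ d (t + 1) → D ≤ d t := by
  intro t h
  by_contra hlt
  push_neg at hlt
  have hDpos : (0:ℝ) < D := by linarith [hD1]
  have hdp := dpos b m d hrec hd0 t
  have h2b : (0:ℝ) < 2 ^ b := rpow_pos_of_pos two_pos b
  have hexp : (0:ℝ) ≤ 1 - 1/m := by
    have : 1/m ≤ 1 := by
      rw [div_le_one (by linarith)]; linarith
    linarith
  have hr1 : d t ^ (1 - 1/m) ≤ D ^ (1 - 1/m) :=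
    rpow_le_rpow hdp.le hlt.le hexp
  have hr2 : D ^ (1 - 1/m) = D * D ^ (-(1/m)) := by
    rw [show (1 : ℝ) - 1/m = 1 + -(1/m) by ring, rpow_add hDpos, rpow_one]
  have hr3 : D ^ (1 - 1/m) ≤ D * (1 - 2 ^ (-b)) := by
    rw [hr2]
    exact mul_le_mul_of_nonneg_left h1 hDpos.le
  have hne : (2:ℝ) ^ (-b) = ((2:ℝ) ^ b)⁻¹ := rpow_neg (by norm_num) b
  have hdiv : d t / 2 ^ b < D * 2 ^ (-b) := by
    rw [hne, div_eq_mul_inv]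
    exact mul_lt_mul_of_pos_right hlt (by positivity)
  have := hrec t
  nlinarith [h, this, hdiv, hr1, hr3]

include hb hm hD1 hrec hd0 in
lemma dstayLe (h1 : D ^ (-(1/m)) ≤ 1 - 2 ^ (-b)) :
    ∀ k t, D ≤ d (t + k) → D ≤ d t := by
  intro k
  induction k with
  | zero => intro t h; exact h
  | succ n ih =>
    intro t h
    have : D ≤ d (t + 1) := ih (t+1) (by rw [show t + 1 + n = t + (n+1) by ring]; exact h)
    exact dstay b m D d hb hm hD1 hrec hd0 h1 t this

include hb hm hD1 hrec hd0 in
lemma dstep : ∀ t, D ≤ d t → d (t + 1) ≤ d t * (2 ^ (-b) + D ^ (-(1/m))) := by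
  intro t h
  have hDpos : (0:ℝ) < D := by linarith
  have hdp := dpos b m d hrec hd0 t
  have h1 : d t ^ (1 - 1/m) = d t * d t ^ (-(1/m)) := by
    rw [show (1 : ℝ) - 1/m = 1 + -(1/m) by ring, rpow_add hdp, rpow_one]
  have h2 : d t ^ (-(1/m)) ≤ D ^ (-(1/m)) :=
    rpow_le_rpow_of_nonpos hDpos h (neg_nonpos.mpr (by positivity))
  have hne : (2:ℝ) ^ (-b) = ((2:ℝ) ^ b)⁻¹ := rpow_neg (by norm_num) b
  rw [hrec t, h1, hne, div_eq_mul_inv, mul_add]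
  have := mul_le_mul_of_nonneg_left h2 hdp.le
  linarith

include hb hm hD1 hrec hd0 in
lemma dback (h1 : D ^ (-(1/m)) ≤ 1 - 2 ^ (-b)) :
    ∀ k t, D ≤ d (t + k) → d (t + k) ≤ d t * (2 ^ (-b) + D ^ (-(1/m))) ^ k := by
  intro k
  induction k with
  | zero => intro t h; simp
  | succ n ih =>
    intro t h
    have heq : t + (n + 1) = (t + 1) + n := by ring
    rw [heq] at h ⊢
    have h2 := ih (t+1) h
    have hDt : D ≤ d t := dstayLe b m D d hb hm hD1 hrec hd0 h1 (n+1) t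
      (by rw [show t + (n+1) = t+1+n by ring]; exact h)
    have h3 := dstep b m D d hb hm hD1 hrec hd0 t hDt
    calc d (t + 1 + n) ≤ d (t+1) * (2 ^ (-b) + D ^ (-(1/m))) ^ n := h2
      _ ≤ (d t * (2 ^ (-b) + D ^ (-(1/m)))) * (2 ^ (-b) + D ^ (-(1/m))) ^ n :=
          mul_le_mul_of_nonneg_right h3 (by positivity)
      _ = d t * (2 ^ (-b) + D ^ (-(1/m))) ^ (n+1) := by ring

include hb hm hD1 hrec hd0 in
lemma dmain (h1 : D ^ (-(1/m)) ≤ 1 - 2 ^ (-b))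
    (hrlt : (2 ^ (-b) + D ^ (-(1/m))) ^ (1/m) < 1) :
    ∀ k t, D ≤ d (t + k) →
      d (t + k) ≤ d t * ((2:ℝ) ^ (-b)) ^ k *
        Real.exp ((2 ^ b * D ^ (-(1/m))) *
          (((2 ^ (-b) + D ^ (-(1/m))) ^ (1/m)) - ((2 ^ (-b) + D ^ (-(1/m))) ^ (1/m)) ^ (k+1)) /
          (1 - (2 ^ (-b) + D ^ (-(1/m))) ^ (1/m))) := by
  have hDpos : (0:ℝ) < D := by linarith
  set ρ := (2:ℝ) ^ (-b) + D ^ (-(1/m)) with hρdef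
  set r := ρ ^ (1/m) with hrdef
  set E := (2:ℝ) ^ b * D ^ (-(1/m)) with hEdef
  have hρpos : 0 < ρ := by rw [hρdef]; positivity
  have hrpos : 0 < r := rpow_pos_of_pos hρpos _
  have h1r : 0 < 1 - r := by linarith
  have hEpos : 0 < E := by rw [hEdef]; positivity
  have h2bpos : (0:ℝ) < 2 ^ b := rpow_pos_of_pos two_pos b
  have h2nbpos : (0:ℝ) < 2 ^ (-b) := rpow_pos_of_pos two_pos (-b)
  intro k
  induction k with
  | zero =>
    intro t h
    simp only [Nat.add_zero, pow_zero, mul_one, zero_add, pow_one]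
    rw [show E * (r - r) / (1 - r) = 0 by ring, Real.exp_zero, mul_one]
  | succ n ih =>
    intro t h
    have heq : t + (n + 1) = (t + 1) + n := by ring
    rw [heq] at h
    have h2 := ih (t+1) h
    have hDt : D ≤ d t := dstayLe b m D d hb hm hD1 hrec hd0 h1 (n+1) t
      (by rw [show t + (n+1) = t+1+n by ring]; exact h)
    have hdp := dpos b m d hrec hd0 t
    -- lower bound on d t : D / ρ^(n+1) ≤ d t
    have hbk := dback b m D d hb hm hD1 hrec hd0 h1 (n+1) t
      (by rw [show t + (n+1) = t+1+n by ring]; exact h)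
    rw [show t + (n+1) = t+1+n by ring] at hbk
    have hlow : D / ρ ^ (n+1) ≤ d t := by
      rw [div_le_iff₀ (by positivity)]
      calc D ≤ d (t+1+n) := h
        _ ≤ d t * ρ ^ (n+1) := hbk
    -- d t ^ (-(1/m)) ≤ D^(-(1/m)) * r^(n+1)
    have hkey : (D / ρ ^ (n+1)) ^ (-(1/m)) = D ^ (-(1/m)) * r ^ (n+1) := by
      rw [hrdef, div_rpow hDpos.le (by positivity), ← rpow_natCast ρ (n+1),
        ← rpow_mul hρpos.le, ← rpow_natCast (ρ ^ (1/m)) (n+1), ← rpow_mul hρpos.le,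
        div_eq_mul_inv, ← rpow_neg hρpos.le]
      congr 1
      push_cast
      ring
    have hdinv : d t ^ (-(1/m)) ≤ D ^ (-(1/m)) * r ^ (n+1) := by
      rw [← hkey]
      exact rpow_le_rpow_of_nonpos (by positivity) hlow (neg_nonpos.mpr (by positivity))
    -- one-step bound
    have hstep1 : d (t+1) ≤ d t * 2 ^ (-b) * (1 + E * r ^ (n+1)) := by
      have hsplit : d t ^ (1 - 1/m) = d t * d t ^ (-(1/m)) := by
        rw [show (1 : ℝ) - 1/m = 1 + -(1/m) by ring, rpow_add hdp, rpow_one]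
      have hne : (2:ℝ) ^ (-b) = ((2:ℝ) ^ b)⁻¹ := rpow_neg (by norm_num) b
      have hcancel : (2:ℝ) ^ (-b) * 2 ^ b = 1 := by
        rw [← rpow_add two_pos]; simp
      rw [hrec t, hsplit, div_eq_mul_inv, ← hne]
      have h3 : d t * d t ^ (-(1/m)) ≤ d t * (D ^ (-(1/m)) * r ^ (n+1)) :=
        mul_le_mul_of_nonneg_left hdinv hdp.le
      have : d t * 2 ^ (-b) * (1 + E * r ^ (n+1))
          = d t * 2 ^ (-b) + d t * ((2 ^ (-b) * 2 ^ b) * (D ^ (-(1/m)) * r ^ (n+1))) := by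
        rw [hEdef]; ring
      rw [this, hcancel, one_mul]
      linarith
    have hstep2 : d (t+1) ≤ d t * 2 ^ (-b) * Real.exp (E * r ^ (n+1)) := by
      refine hstep1.trans (mul_le_mul_of_nonneg_left ?_ (by positivity))
      have := Real.add_one_le_exp (E * r ^ (n+1))
      linarith
    calc d (t + (n+1)) = d (t+1+n) := by rw [heq]
      _ ≤ d (t+1) * ((2:ℝ) ^ (-b)) ^ n * Real.exp (E * (r - r ^ (n+1)) / (1 - r)) := h2
      _ ≤ (d t * 2 ^ (-b) * Real.exp (E * r ^ (n+1))) * ((2:ℝ) ^ (-b)) ^ n *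
            Real.exp (E * (r - r ^ (n+1)) / (1 - r)) := by
          have he := Real.exp_pos (E * (r - r ^ (n+1)) / (1 - r))
          have := mul_le_mul_of_nonneg_right hstep2 (le_of_lt (by positivity :
            (0:ℝ) < ((2:ℝ) ^ (-b)) ^ n))
          exact mul_le_mul_of_nonneg_right this he.le
      _ = d t * ((2:ℝ) ^ (-b)) ^ (n+1) *
            (Real.exp (E * r ^ (n+1)) * Real.exp (E * (r - r ^ (n+1)) / (1 - r))) := by ring
      _ = d t * ((2:ℝ) ^ (-b)) ^ (n+1) * Real.exp (E * (r - r ^ (n+1+1)) / (1 - r)) := by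
          rw [← Real.exp_add]
          congr 1
          field_simp
          ring

end

set_option maxHeartbeats 1000000 in
/-- Proposition `seqclaim`: let `a, b, m ≥ 1` be fixed reals. Then
there exists `D > 0` (depending only on `a, b, m`) such that for every `g > 0` and
`d₀ > 0`, if the sequences `d_t`, `s_t` satisfy `d 0 = d₀`, `s 0 = d₀^{a/b} g`,
`d_{t+1} = d_t/2^b + d_t^{1-1/m}` and `s_{t+1} = s_t/2^a + d_t^{a/b-1/m}`, then for
every `t` with `d_t ≥ D` one has `d_t ≤ 2 d₀ 2^{-bt}` and
`s_t ≤ d_t^{a/b} g + d_t^{a/b - 1/(2m)}`. -/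
theorem statement_9 (a b m : ℝ) (ha : 1 ≤ a) (hb : 1 ≤ b) (hm : 1 ≤ m) :
    ∃ D : ℝ, 0 < D ∧ ∀ g : ℝ, 0 < g → ∀ d₀ : ℝ, 0 < d₀ →
      ∀ d s : ℕ → ℝ, d 0 = d₀ → s 0 = d₀ ^ (a / b) * g →
      (∀ t : ℕ, d (t + 1) = d t / 2 ^ b + d t ^ (1 - 1 / m)) →
      (∀ t : ℕ, s (t + 1) = s t / 2 ^ a + d t ^ (a / b - 1 / m)) →
      ∀ t : ℕ, D ≤ d t →
        d t ≤ 2 * d₀ * 2 ^ (-(b * t)) ∧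
        s t ≤ d t ^ (a / b) * g + d t ^ (a / b - 1 / (2 * m)) := by
  classical
  have hm0 : (0:ℝ) < m := by linarith
  have hb0 : (0:ℝ) < b := by linarith
  have h2b : (0:ℝ) < (2:ℝ) ^ b := Real.rpow_pos_of_pos two_pos b
  have h2nb : (0:ℝ) < (2:ℝ) ^ (-b) := Real.rpow_pos_of_pos two_pos (-b)
  have h2a : (0:ℝ) < (2:ℝ) ^ a := Real.rpow_pos_of_pos two_pos a
  have hcb : (2:ℝ) ^ (-b) ≤ 1/2 := by
    have := Real.rpow_le_rpow_of_exponent_le (x := (2:ℝ)) one_le_two (by linarith : -b ≤ -1)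
    simpa [Real.rpow_neg_one] using this
  have hca : (2:ℝ) ^ (-a) ≤ 1/2 := by
    have := Real.rpow_le_rpow_of_exponent_le (x := (2:ℝ)) one_le_two (by linarith : -a ≤ -1)
    simpa [Real.rpow_neg_one] using this
  -- choose D
  obtain ⟨D, hD1, h1, h2, h3, h4, h5⟩ : ∃ D : ℝ, 1 ≤ D ∧
      D ^ (-(1/m)) ≤ 1 - 2 ^ (-b) ∧ D ^ (-(1/m)) ≤ 1/4 ∧
      2 ^ b * D ^ (-(1/m)) * (4*m) ≤ Real.log 2 ∧
      D ^ (-(1/(2*m))) ≤ 2 ^ (-a) * (2 ^ (b/(2*m)) - 1) ∧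
      D ^ (-(1/(2*m))) ≤ 1/2 := by
    have h1pos : (0:ℝ) < 1 - 2 ^ (-b) := by linarith
    have h4pos : (0:ℝ) < 2 ^ (-a) * (2 ^ (b/(2*m)) - 1) := by
      have h' : (1:ℝ) < 2 ^ (b/(2*m)) := by
        have := Real.rpow_lt_rpow_of_exponent_lt (x := (2:ℝ)) one_lt_two
          (by positivity : (0:ℝ) < b/(2*m))
        simpa using this
      have := Real.rpow_pos_of_pos (two_pos) (-a)
      nlinarith
    have t1 := tendsto_rpow_neg_atTop (by positivity : (0:ℝ) < 1/m)
    have t2 := tendsto_rpow_neg_atTop (by positivity : (0:ℝ) < 1/(2*m))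
    have e1 := t1.eventually_lt_const h1pos
    have e2 := t1.eventually_lt_const (by norm_num : (0:ℝ) < 1/4)
    have e3 : ∀ᶠ D : ℝ in Filter.atTop, 2 ^ b * D ^ (-(1/m)) * (4*m) < Real.log 2 := by
      have hl : (0:ℝ) < Real.log 2 := Real.log_pos one_lt_two
      have := t1.eventually_lt_const (by positivity : (0:ℝ) < Real.log 2 / (2 ^ b * (4*m)))
      filter_upwards [this] with D hD
      have hD' : 2 ^ b * (4*m) * D ^ (-(1/m)) < Real.log 2 := by
        rw [← lt_div_iff₀' (by positivity)]
        exact hD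
      nlinarith [hD']
    have e4 := t2.eventually_lt_const h4pos
    have e5 := t2.eventually_lt_const (by norm_num : (0:ℝ) < 1/2)
    obtain ⟨D, hD1, hD2, hD3, hD4, hD5, hD6⟩ :=
      ((Filter.eventually_ge_atTop (1:ℝ)).and (e1.and (e2.and (e3.and (e4.and e5))))).exists
    exact ⟨D, hD1, hD2.le, hD3.le, hD4.le, hD5.le, hD6.le⟩
  have hDpos : (0:ℝ) < D := by linarith
  refine ⟨D, hDpos, ?_⟩
  intro g hg d₀ hd₀ d s hd0eq hs0 hrec hsrec
  have hd0 : 0 < d 0 := by rw [hd0eq]; exact hd₀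
  have hdp := dpos b m d hrec hd0
  -- notation
  set ρ := (2:ℝ) ^ (-b) + D ^ (-(1/m)) with hρdef
  have hρpos : 0 < ρ := by positivity
  have hρ34 : ρ ≤ 3/4 := by rw [hρdef]; linarith
  set r := ρ ^ (1/m) with hrdef
  have hrpos : 0 < r := Real.rpow_pos_of_pos hρpos _
  -- Bernoulli bound : r ≤ 1 - 1/(4m)
  have hrle : r ≤ 1 - 1/(4*m) := by
    set sb := (ρ - 1)/m with hsbdef
    have hsb : -1 ≤ sb := by
      rw [hsbdef, le_div_iff₀ hm0]
      nlinarith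
    have hbern := one_add_mul_self_le_rpow_one_add hsb hm
    have h1sb : 1 + m * sb = ρ := by
      rw [hsbdef]
      field_simp
      ring
    rw [h1sb] at hbern
    have h01 : (0:ℝ) ≤ 1 + sb := by linarith
    have : r ≤ ((1 + sb) ^ m) ^ (1/m) :=
      Real.rpow_le_rpow hρpos.le hbern (by positivity)
    rw [← Real.rpow_mul h01, mul_one_div, div_self (ne_of_gt hm0), Real.rpow_one] at this
    have hsb2 : sb ≤ -(1/4)/m := by
      rw [hsbdef]
      exact div_le_div_of_nonneg_right (by linarith) hm0.le
    calc r ≤ 1 + sb := this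
      _ ≤ 1 - 1/(4*m) := by
          have : -(1/4)/m = -(1/(4*m)) := by field_simp
          rw [this] at hsb2
          linarith
  have h4m : (0:ℝ) < 1/(4*m) := by positivity
  have hrlt : r < 1 := by linarith
  have h1r : 0 < 1 - r := by linarith
  intro t hDt
  constructor
  · -- d bound
    have hmt := dmain b m D d hb hm hD1 hrec hd0 h1 hrlt t 0 (by simpa using hDt)
    simp only [Nat.zero_add] at hmt
    set E := (2:ℝ) ^ b * D ^ (-(1/m)) with hEdef
    have hEpos : 0 < E := by positivity
    have hexple : E * (r - r ^ (t+1)) / (1 - r) ≤ Real.log 2 := by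
      have hr1 : r - r ^ (t+1) ≤ 1 := by
        have : (0:ℝ) ≤ r ^ (t+1) := by positivity
        linarith
      have harg : E * (r - r ^ (t+1)) / (1 - r) ≤ E / (1 - r) :=
        div_le_div_of_nonneg_right (by nlinarith) h1r.le
      have hfrac : E / (1 - r) ≤ E * (4*m) := by
        rw [div_le_iff₀ h1r]
        have h4 : 1 ≤ (4*m) * (1-r) := by
          have h := mul_le_mul_of_nonneg_left (show 1/(4*m) ≤ 1 - r by linarith)
            (show (0:ℝ) ≤ 4*m by positivity)
          have he : (4*m) * (1/(4*m)) = 1 := by field_simp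
          calc (1:ℝ) = (4*m) * (1/(4*m)) := he.symm
            _ ≤ (4*m) * (1-r) := h
        nlinarith [h4, hEpos]
      calc E * (r - r ^ (t+1)) / (1 - r) ≤ E / (1-r) := harg
        _ ≤ E * (4*m) := hfrac
        _ = 2 ^ b * D ^ (-(1/m)) * (4*m) := by rw [hEdef]
        _ ≤ Real.log 2 := h3
    have hexp2 : Real.exp (E * (r - r ^ (t+1)) / (1 - r)) ≤ 2 := by
      calc Real.exp (E * (r - r ^ (t+1)) / (1 - r)) ≤ Real.exp (Real.log 2) :=
            Real.exp_le_exp.mpr hexple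
        _ = 2 := Real.exp_log two_pos
    have hpowt : ((2:ℝ) ^ (-b)) ^ t = (2:ℝ) ^ (-(b * t)) := by
      rw [← Real.rpow_natCast ((2:ℝ) ^ (-b)) t, ← Real.rpow_mul (by norm_num : (0:ℝ) ≤ 2)]
      congr 1
      ring
    calc d t ≤ d 0 * ((2:ℝ) ^ (-b)) ^ t * Real.exp (E * (r - r ^ (t+1)) / (1 - r)) := hmt
      _ ≤ d 0 * ((2:ℝ) ^ (-b)) ^ t * 2 := by
          apply mul_le_mul_of_nonneg_left hexp2
          positivity
      _ = 2 * d₀ * 2 ^ (-(b * t)) := by rw [hpowt, hd0eq]; ring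
  · -- s bound
    have hsb : ∀ u : ℕ, D ≤ d u → s u ≤ d u ^ (a/b) * g + d u ^ (a/b - 1/(2*m)) := by
      intro u
      induction u with
      | zero =>
        intro _
        rw [hs0, hd0eq]
        have : (0:ℝ) ≤ d₀ ^ (a/b - 1/(2*m)) := Real.rpow_nonneg hd₀.le _
        rw [← hd0eq]
        rw [hd0eq]
        linarith
      | succ n ih =>
        intro hDn1
        have hDn : D ≤ d n := dstay b m D d hb hm hD1 hrec hd0 h1 n hDn1
        have hIH := ih hDn
        have hdn := hdp n
        have hdn1 := hdp (n+1)
        set e := a/b - 1/(2*m) with hedef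
        -- basic rpow identities
        have hsplit3 : d n ^ (a/b - 1/m) = d n ^ e * d n ^ (-(1/(2*m))) := by
          rw [← Real.rpow_add hdn]
          congr 1
          rw [hedef]
          field_simp
          ring
        have hdninv : d n ^ (-(1/(2*m))) ≤ D ^ (-(1/(2*m))) :=
          Real.rpow_le_rpow_of_nonpos hDpos hDn (neg_nonpos.mpr (by positivity))
        have hlow : d n * 2 ^ (-b) ≤ d (n+1) := by
          rw [hrec n]
          have h0 : (0:ℝ) ≤ d n ^ (1 - 1/m) := Real.rpow_nonneg hdn.le _
          have : d n / 2 ^ b = d n * 2 ^ (-b) := by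
            rw [Real.rpow_neg (by norm_num : (0:ℝ) ≤ 2), div_eq_mul_inv]
          linarith [this ▸ le_refl (d n / 2 ^ b)]
        have hposab : (0:ℝ) ≤ a/b := by positivity
        -- term 1 : d n ^(a/b) * 2^(-a) ≤ d(n+1)^(a/b)
        have hterm1 : d n ^ (a/b) * 2 ^ (-a) ≤ d (n+1) ^ (a/b) := by
          have hmr : (d n * 2 ^ (-b)) ^ (a/b) = d n ^ (a/b) * 2 ^ (-a) := by
            rw [Real.mul_rpow hdn.le h2nb.le]
            congr 1
            rw [← Real.rpow_mul (by norm_num : (0:ℝ) ≤ 2)]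
            congr 1
            field_simp
          rw [← hmr]
          exact Real.rpow_le_rpow (by positivity) hlow hposab
        -- term 2 : d n ^ e * 2^(-a) + d n ^ e * D^(-(1/(2m))) ≤ d (n+1) ^ e
        have hterm2 : d n ^ e * 2 ^ (-a) + d n ^ e * D ^ (-(1/(2*m))) ≤ d (n+1) ^ e := by
          have hdne : (0:ℝ) < d n ^ e := Real.rpow_pos_of_pos hdn _
          rcases le_or_gt 0 e with he | he
          · -- e ≥ 0 case
            have hmr : (d n * 2 ^ (-b)) ^ e = d n ^ e * ((2:ℝ) ^ (-a) * 2 ^ (b/(2*m))) := by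
              rw [Real.mul_rpow hdn.le h2nb.le]
              congr 1
              rw [← Real.rpow_mul (by norm_num : (0:ℝ) ≤ 2),
                  ← Real.rpow_add (by norm_num : (0:ℝ) < 2)]
              congr 1
              rw [hedef]
              field_simp
              ring
            have hle : d n ^ e * ((2:ℝ) ^ (-a) * 2 ^ (b/(2*m))) ≤ d (n+1) ^ e := by
              rw [← hmr]
              exact Real.rpow_le_rpow (by positivity) hlow he
            have h2' : d n ^ e * D ^ (-(1/(2*m))) ≤ d n ^ e * (2 ^ (-a) * (2 ^ (b/(2*m)) - 1)) :=
              mul_le_mul_of_nonneg_left h4 hdne.le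
            nlinarith [h2', hle]
          · -- e < 0 case
            have hup : d (n+1) ≤ d n * ρ := dstep b m D d hb hm hD1 hrec hd0 n hDn
            have hmr : (d n * ρ) ^ e = d n ^ e * ρ ^ e :=
              Real.mul_rpow hdn.le hρpos.le
            have hge : d n ^ e * ρ ^ e ≤ d (n+1) ^ e := by
              rw [← hmr]
              exact Real.rpow_le_rpow_of_nonpos hdn1 hup he.le
            have hρe : (1:ℝ) ≤ ρ ^ e :=
              Real.one_le_rpow_of_pos_of_le_one_of_nonpos hρpos (hρ34.trans (by norm_num)) he.le
            have h2' : d n ^ e * D ^ (-(1/(2*m))) ≤ d n ^ e * (1/2) :=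
              mul_le_mul_of_nonneg_left h5 hdne.le
            nlinarith [h2', hge, hρe, mul_le_mul_of_nonneg_left hca hdne.le]
        -- combine
        have hsdiv : s n / 2 ^ a ≤ d n ^ (a/b) * g * 2 ^ (-a) + d n ^ e * 2 ^ (-a) := by
          have hinv : (2:ℝ) ^ (-a) = ((2:ℝ) ^ a)⁻¹ := Real.rpow_neg (by norm_num) a
          rw [div_eq_mul_inv, ← hinv] at *
          calc s n * 2 ^ (-a) ≤ (d n ^ (a/b) * g + d n ^ e) * 2 ^ (-a) :=
                mul_le_mul_of_nonneg_right hIH (Real.rpow_pos_of_pos two_pos (-a)).le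
            _ = d n ^ (a/b) * g * 2 ^ (-a) + d n ^ e * 2 ^ (-a) := by ring
        rw [hsrec n, hsplit3]
        have hg1 : d n ^ (a/b) * g * 2 ^ (-a) ≤ d (n+1) ^ (a/b) * g := by
          have := mul_le_mul_of_nonneg_right hterm1 hg.le
          nlinarith [this]
        have h2'' : d n ^ e * d n ^ (-(1/(2*m))) ≤ d n ^ e * D ^ (-(1/(2*m))) :=
          mul_le_mul_of_nonneg_left hdninv (Real.rpow_nonneg hdn.le _)
        calc s n / 2 ^ a + d n ^ e * d n ^ (-(1/(2*m)))
            ≤ (d n ^ (a/b) * g * 2 ^ (-a) + d n ^ e * 2 ^ (-a)) +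
              d n ^ e * D ^ (-(1/(2*m))) := by linarith [hsdiv, h2'']
          _ ≤ d (n+1) ^ (a/b) * g + d (n+1) ^ e := by linarith [hg1, hterm2]
    exact hsb t hDt
end
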